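/- Let (Ω, 𝓕, P) be a probability space, n a positive integer, ψ : ℝ → ℂ a function, and a_{ij} ∈ ℝ for 1 ≤ i ≤ j ≤ n. Let (Z_{ij})_{1 ≤ i ≤ j ≤ n} be an independent family of real-valued random variables on Ω such that for each pair i ≤ j and every θ ∈ ℝ, E[e^{i θ Z_{ij}}] = exp(a_{ij} ψ(θ)). Define Y_k := ∑_{1 ≤ i ≤ k, k ≤ j ≤ n} Z_{ij} for k = 1, …, n. Then for all real θ_1, …, θ_n: E[exp(i ∑_{k=1}^n θ_k Y_k)] = exp( ∑_{1 ≤ i ≤ j ≤ n} a_{ij} ψ(θ_i + ⋯ + θ_j) ). -/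

import Mathlib

open Finset MeasureTheory ProbabilityTheory

lemma indepFun_integral_mul_complex {Ω : Type*} [MeasurableSpace Ω] {P : Measure Ω}
    [IsProbabilityMeasure P] {X Y : Ω → ℂ} (h : IndepFun X Y P)
    (hX : AEMeasurable X P) (hY : AEMeasurable Y P) :
    ∫ ω, X ω * Y ω ∂P = (∫ ω, X ω ∂P) * ∫ ω, Y ω ∂P := by
  have hmap := (indepFun_iff_map_prod_eq_prod_map_map hX hY).mp h
  have hXY : AEMeasurable (fun ω => (X ω, Y ω)) P := hX.prodMk hY
  have := Measure.isProbabilityMeasure_map hX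
  have := Measure.isProbabilityMeasure_map hY
  have h1 : ∫ ω, X ω * Y ω ∂P = ∫ p : ℂ × ℂ, p.1 * p.2 ∂(P.map (fun ω => (X ω, Y ω))) := by
    rw [integral_map hXY]
    exact (measurable_fst.mul measurable_snd).aestronglyMeasurable
  rw [h1, hmap, integral_prod_mul (f := fun x : ℂ => x) (g := fun x : ℂ => x),
    integral_map hX (f := fun x : ℂ => x) aestronglyMeasurable_id,
    integral_map hY (f := fun x : ℂ => x) aestronglyMeasurable_id]

lemma integral_finset_prod_of_iIndepFun {Ω ι : Type*} [MeasurableSpace Ω]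
    (P : Measure Ω) [IsProbabilityMeasure P] (g : ι → Ω → ℂ)
    (hindep : iIndepFun g P)
    (hmeas : ∀ i, Measurable (g i))
    (s : Finset ι) :
    ∫ ω, ∏ i ∈ s, g i ω ∂P = ∏ i ∈ s, ∫ ω, g i ω ∂P := by
  classical
  induction s using Finset.induction_on with
  | empty => simp
  | @insert a s ha ih =>
    have hind : ProbabilityTheory.IndepFun (∏ i ∈ s, g i) (g a) P :=
      hindep.indepFun_finsetProd_of_notMem hmeas ha
    have hm : AEMeasurable (∏ i ∈ s, g i) P := by
      have : Measurable (∏ i ∈ s, g i) := by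
        apply Finset.prod_induction _ Measurable (fun u v hu hv => hu.mul hv) measurable_const
        exact fun i _ => hmeas i
      exact this.aemeasurable
    have := indepFun_integral_mul_complex hind hm (hmeas a).aemeasurable
    simp only [Finset.prod_apply] at this
    simp_rw [Finset.prod_insert ha, mul_comm (g a _)]
    calc ∫ ω, (∏ i ∈ s, g i ω) * g a ω ∂P = (∫ ω, ∏ i ∈ s, g i ω ∂P) * ∫ ω, g a ω ∂P := this
    _ = (∏ i ∈ s, ∫ ω, g i ω ∂P) * ∫ ω, g a ω ∂P := by rw [ih]
    _ = _ := by rw [mul_comm]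

theorem joint_char_function_of_triangular_sums
    {Ω : Type*} [MeasurableSpace Ω] (P : Measure Ω) [IsProbabilityMeasure P]
    (n : ℕ) (hn : 0 < n) (ψ : ℝ → ℂ) (a : ℕ → ℕ → ℝ)
    (Z : ℕ → ℕ → Ω → ℝ)
    (hmeas : ∀ i j, Measurable (Z i j))
    (hindep : iIndepFun
      (fun p : {p : ℕ × ℕ // 1 ≤ p.1 ∧ p.1 ≤ p.2 ∧ p.2 ≤ n} => Z p.1.1 p.1.2) P)
    (hchar : ∀ i j, 1 ≤ i → i ≤ j → j ≤ n → ∀ θ : ℝ,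
      ∫ ω, Complex.exp (Complex.I * θ * Z i j ω) ∂P
        = Complex.exp ((a i j : ℂ) * ψ θ))
    (Y : ℕ → Ω → ℝ)
    (hY : ∀ k ω, Y k ω = ∑ i ∈ Icc 1 k, ∑ j ∈ Icc k n, Z i j ω)
    (θ : ℕ → ℝ) :
    ∫ ω, Complex.exp (Complex.I * (∑ k ∈ Icc 1 n, θ k * Y k ω : ℝ)) ∂P
      = Complex.exp (∑ i ∈ Icc 1 n, ∑ j ∈ Icc i n,
          (a i j : ℂ) * ψ (∑ m ∈ Icc i j, θ m)) := by
  classical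
  set pr : ℕ × ℕ → Prop := fun p => 1 ≤ p.1 ∧ p.1 ≤ p.2 ∧ p.2 ≤ n with hpr
  set T : Finset (ℕ × ℕ) := (Icc 1 n ×ˢ Icc 1 n).filter (fun p => p.1 ≤ p.2) with hT
  have hmemT : ∀ p, p ∈ T ↔ pr p := by
    intro p
    simp only [hT, hpr, Finset.mem_filter, Finset.mem_product, mem_Icc]
    omega
  set c : ℕ × ℕ → ℝ := fun p => ∑ m ∈ Icc p.1 p.2, θ m with hc
  -- Step 1: rewrite the exponent sum
  have step1 : ∀ ω, ∑ k ∈ Icc 1 n, θ k * Y k ω = ∑ p ∈ T, c p * Z p.1 p.2 ω := by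
    intro ω
    have e1 : ∑ k ∈ Icc 1 n, θ k * Y k ω
        = ∑ k ∈ Icc 1 n, ∑ i ∈ Icc 1 n, ∑ j ∈ Icc 1 n,
            (if i ≤ k ∧ k ≤ j then θ k * Z i j ω else 0) := by
      refine Finset.sum_congr rfl fun k hk => ?_
      simp only [mem_Icc] at hk
      rw [hY, Finset.mul_sum]
      simp_rw [Finset.mul_sum]
      rw [show Icc 1 k = (Icc 1 n).filter (fun i => i ≤ k) by
        ext x; simp only [mem_Icc, Finset.mem_filter]; omega, Finset.sum_filter]
      refine Finset.sum_congr rfl fun i _ => ?_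
      by_cases h : i ≤ k
      · simp only [h, if_true, true_and]
        rw [show Icc k n = (Icc 1 n).filter (fun j => k ≤ j) by
          ext x; simp only [mem_Icc, Finset.mem_filter]; omega, Finset.sum_filter]
      · simp [h]
    have e2 : ∑ k ∈ Icc 1 n, ∑ i ∈ Icc 1 n, ∑ j ∈ Icc 1 n,
            (if i ≤ k ∧ k ≤ j then θ k * Z i j ω else 0)
        = ∑ i ∈ Icc 1 n, ∑ j ∈ Icc 1 n, ∑ k ∈ Icc 1 n,
            (if i ≤ k ∧ k ≤ j then θ k * Z i j ω else 0) := by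
      rw [Finset.sum_comm]
      exact Finset.sum_congr rfl fun i _ => Finset.sum_comm
    have e3 : ∑ i ∈ Icc 1 n, ∑ j ∈ Icc 1 n, ∑ k ∈ Icc 1 n,
            (if i ≤ k ∧ k ≤ j then θ k * Z i j ω else 0)
        = ∑ i ∈ Icc 1 n, ∑ j ∈ Icc 1 n, c (i, j) * Z i j ω := by
      refine Finset.sum_congr rfl fun i hi => Finset.sum_congr rfl fun j hj => ?_
      simp only [mem_Icc] at hi hj
      rw [hc]
      simp only
      rw [Finset.sum_mul]
      rw [show Icc i j = (Icc 1 n).filter (fun k => i ≤ k ∧ k ≤ j) by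
        ext x; simp only [mem_Icc, Finset.mem_filter]; omega, Finset.sum_filter]
    have e4 : ∑ i ∈ Icc 1 n, ∑ j ∈ Icc 1 n, c (i, j) * Z i j ω
        = ∑ p ∈ T, c p * Z p.1 p.2 ω := by
      rw [← Finset.sum_product']
      rw [hT]
      symm
      refine Finset.sum_filter_of_ne fun p hp hne => ?_
      by_contra h
      apply hne
      have : Icc p.1 p.2 = ∅ := Icc_eq_empty (by omega)
      simp [hc, this]
    rw [e1, e2, e3, e4]
  -- the subtype index set
  set Sfin : Finset {p : ℕ × ℕ // 1 ≤ p.1 ∧ p.1 ≤ p.2 ∧ p.2 ≤ n} := T.subtype pr with hSfin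
  set g : {p : ℕ × ℕ // 1 ≤ p.1 ∧ p.1 ≤ p.2 ∧ p.2 ≤ n} → Ω → ℂ :=
    fun q ω => Complex.exp (Complex.I * (c q.1 : ℝ) * Z q.1.1 q.1.2 ω) with hg
  have hmeasg : ∀ q, Measurable (g q) := by
    intro q
    apply Complex.measurable_exp.comp
    exact (measurable_const.mul (Complex.measurable_ofReal.comp (hmeas q.1.1 q.1.2)))
  have hindepg : iIndepFun g P := by
    have := hindep.comp
      (fun q => fun x : ℝ => Complex.exp (Complex.I * (c q.1 : ℝ) * x))
      (fun q => Complex.measurable_exp.comp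
        (measurable_const.mul Complex.measurable_ofReal))
    exact this
  have hsub : ∀ {M : Type} [AddCommMonoid M] (F : ℕ × ℕ → M),
      ∑ q ∈ Sfin, F q.1 = ∑ p ∈ T, F p := by
    intro M _ F
    rw [hSfin, Finset.sum_subtype_eq_sum_filter,
      Finset.filter_true_of_mem (fun p hp => (hmemT p).mp hp)]
  calc ∫ ω, Complex.exp (Complex.I * (∑ k ∈ Icc 1 n, θ k * Y k ω : ℝ)) ∂P
      = ∫ ω, ∏ q ∈ Sfin, g q ω ∂P := by
        refine integral_congr_ae (Filter.EventuallyEq.of_eq (funext fun ω => ?_))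
        rw [step1 ω, ← hsub (fun p => (c p * Z p.1 p.2 ω : ℝ))]
        push_cast
        rw [Finset.mul_sum, Complex.exp_sum]
        refine Finset.prod_congr rfl fun q _ => ?_
        rw [hg]
        ring_nf
    _ = ∏ q ∈ Sfin, ∫ ω, g q ω ∂P :=
        integral_finset_prod_of_iIndepFun P g hindepg hmeasg Sfin
    _ = ∏ q ∈ Sfin, Complex.exp ((a q.1.1 q.1.2 : ℂ) * ψ (c q.1)) := by
        refine Finset.prod_congr rfl fun q _ => ?_
        exact hchar q.1.1 q.1.2 q.2.1 q.2.2.1 q.2.2.2 (c q.1)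
    _ = Complex.exp (∑ q ∈ Sfin, (a q.1.1 q.1.2 : ℂ) * ψ (c q.1)) := (Complex.exp_sum _ _).symm
    _ = Complex.exp (∑ p ∈ T, (a p.1 p.2 : ℂ) * ψ (c p)) := by
        rw [hsub (fun p => (a p.1 p.2 : ℂ) * ψ (c p))]
    _ = Complex.exp (∑ i ∈ Icc 1 n, ∑ j ∈ Icc i n,
          (a i j : ℂ) * ψ (∑ m ∈ Icc i j, θ m)) := by
        congr 1
        rw [hT, Finset.sum_filter, Finset.sum_product]
        refine Finset.sum_congr rfl fun i hi => ?_
        simp only [mem_Icc] at hi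
        rw [show Icc i n = (Icc 1 n).filter (fun j => i ≤ j) by
          ext x; simp only [mem_Icc, Finset.mem_filter]; omega, Finset.sum_filter]
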